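/- Let f : ℝⁿ × ℝᵐ → ℝⁿ and φ : ℝⁿ × ℝᵐ → ℝᵏ be continuously differentiable. Let (q,u,p,λ) : [t₀,t₁] → ℝⁿ × ℝᵐ × ℝⁿ × ℝᵏ be a continuously differentiable solution of the adjoint DAE system: q̇ = f(q,u), ṗ = −D_qf(q,u)ᵀ p − D_qφ(q,u)ᵀ λ, 0 = φ(q,u), 0 = D_uf(q,u)ᵀ p + D_uφ(q,u)ᵀ λ, and let (δq, δu) : [t₀,t₁] → ℝⁿ × ℝᵐ be continuously differentiable curves satisfying the variational equations along (q,u): δq̇ = D_qf(q,u) δq + D_uf(q,u) δu and 0 = D_qφ(q,u) δq + D_uφ(q,u) δu. Then the function t ↦ ⟨p(t), δq(t)⟩ is constant on [t₀,t₁]. -/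
import Mathlib


open scoped RealInnerProductSpace

noncomputable section

abbrev Euc (n : ℕ) : Type := EuclideanSpace ℝ (Fin n)

/-- Partial Jacobian `D_qF(q,u)` with respect to the first argument. -/
noncomputable def Dq {n m k : ℕ} (F : Euc n × Euc m → Euc k) (q : Euc n) (u : Euc m) :
    Euc n →L[ℝ] Euc k :=
  fderiv ℝ (fun q' => F (q', u)) q

/-- Partial Jacobian `D_uF(q,u)` with respect to the second argument. -/
noncomputable def Du {n m k : ℕ} (F : Euc n × Euc m → Euc k) (q : Euc n) (u : Euc m) :
    Euc m →L[ℝ] Euc k :=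
  fderiv ℝ (fun u' => F (q, u')) u

/-- `D_qF(q,u)ᵀ`, the transpose (adjoint) of the partial Jacobian in `q`. -/
noncomputable def DqT {n m k : ℕ} (F : Euc n × Euc m → Euc k) (q : Euc n) (u : Euc m) :
    Euc k →L[ℝ] Euc n :=
  ContinuousLinearMap.adjoint (Dq F q u)

/-- `D_uF(q,u)ᵀ`, the transpose (adjoint) of the partial Jacobian in `u`. -/
noncomputable def DuT {n m k : ℕ} (F : Euc n × Euc m → Euc k) (q : Euc n) (u : Euc m) :
    Euc k →L[ℝ] Euc m :=
  ContinuousLinearMap.adjoint (Du F q u)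

/-- Partial gradient `∇_qL(q,u)`. -/
noncomputable def gradQ {n m : ℕ} (L : Euc n × Euc m → ℝ) (q : Euc n) (u : Euc m) : Euc n :=
  gradient (fun q' => L (q', u)) q

/-- Partial gradient `∇_uL(q,u)`. -/
noncomputable def gradU {n m : ℕ} (L : Euc n × Euc m → ℝ) (q : Euc n) (u : Euc m) : Euc m :=
  gradient (fun u' => L (q, u')) u

/-- along a solution of the adjoint DAE system and a solution of the
variational equations covering the same `(q,u)`, the pairing `⟨p(t), δq(t)⟩`
is constant on `[t₀, t₁]`. -/
theorem adjoint_DAE_quadratic_invariant {n m k : ℕ}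
    (f : Euc n × Euc m → Euc n) (φ : Euc n × Euc m → Euc k)
    (hf : ContDiff ℝ 1 f) (hφ : ContDiff ℝ 1 φ)
    (t₀ t₁ : ℝ)
    (q : ℝ → Euc n) (u : ℝ → Euc m) (p : ℝ → Euc n) (lam : ℝ → Euc k)
    (δq : ℝ → Euc n) (δu : ℝ → Euc m)
    (hq : ContDiff ℝ 1 q) (hu : ContDiff ℝ 1 u) (hp : ContDiff ℝ 1 p)
    (hlam : ContDiff ℝ 1 lam) (hδq : ContDiff ℝ 1 δq) (hδu : ContDiff ℝ 1 δu)
    (hqode : ∀ t ∈ Set.Icc t₀ t₁, HasDerivAt q (f (q t, u t)) t)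
    (hpode : ∀ t ∈ Set.Icc t₀ t₁,
      HasDerivAt p (-(DqT f (q t) (u t) (p t)) - DqT φ (q t) (u t) (lam t)) t)
    (hconstr : ∀ t ∈ Set.Icc t₀ t₁, φ (q t, u t) = 0)
    (hadj : ∀ t ∈ Set.Icc t₀ t₁,
      DuT f (q t) (u t) (p t) + DuT φ (q t) (u t) (lam t) = 0)
    (hδqode : ∀ t ∈ Set.Icc t₀ t₁,
      HasDerivAt δq (Dq f (q t) (u t) (δq t) + Du f (q t) (u t) (δu t)) t)
    (hδconstr : ∀ t ∈ Set.Icc t₀ t₁,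
      Dq φ (q t) (u t) (δq t) + Du φ (q t) (u t) (δu t) = 0) :
    ∀ s ∈ Set.Icc t₀ t₁, ∀ t ∈ Set.Icc t₀ t₁, ⟪p s, δq s⟫ = ⟪p t, δq t⟫ := by
  have key : ∀ t ∈ Set.Icc t₀ t₁, HasDerivAt (fun t => ⟪p t, δq t⟫) 0 t := by
    intro t ht
    have h := (hpode t ht).inner ℝ (hδqode t ht)
    have hc : Dq φ (q t) (u t) (δq t) = -(Du φ (q t) (u t) (δu t)) :=
      eq_neg_of_add_eq_zero_left (hδconstr t ht)
    have ha := congrArg (fun v : Euc m => ⟪v, δu t⟫) (hadj t ht)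
    simp only [DuT, inner_add_left, ContinuousLinearMap.adjoint_inner_left,
      inner_zero_left] at ha
    have hzero : ⟪p t, Dq f (q t) (u t) (δq t) + Du f (q t) (u t) (δu t)⟫
        + ⟪-(DqT f (q t) (u t) (p t)) - DqT φ (q t) (u t) (lam t), δq t⟫ = 0 := by
      simp only [DqT, inner_add_right, inner_sub_left, inner_neg_left,
        ContinuousLinearMap.adjoint_inner_left, hc, inner_neg_right,
        real_inner_comm (p t) (Dq f (q t) (u t) (δq t))]
      have h1 : ⟪p t, Du f (q t) (u t) (δu t)⟫
          = ⟪(Du f (q t) (u t) : Euc m →L[ℝ] Euc n) (δu t), p t⟫ := real_inner_comm _ _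
      linarith [real_inner_comm (p t) (Du f (q t) (u t) (δu t)),
        real_inner_comm (lam t) (Du φ (q t) (u t) (δu t))]
    rw [hzero] at h
    exact h
  have hcont : ContinuousOn (fun t => ⟪p t, δq t⟫) (Set.Icc t₀ t₁) :=
    (Continuous.inner hp.continuous hδq.continuous).continuousOn
  have hder : ∀ x ∈ Set.Ico t₀ t₁,
      HasDerivWithinAt (fun t => ⟪p t, δq t⟫) 0 (Set.Ici x) x := fun x hx =>
    (key x ⟨hx.1, hx.2.le⟩).hasDerivWithinAt
  have hconst := constant_of_has_deriv_right_zero hcont hder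
  intro s hs t ht
  rw [hconst s hs, hconst t ht]

end
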